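/- The join-prime elements of the complete distributive lattice of join-continuous functions [0,1] → [0,1] are exactly the functions e_{x,y} with x < 1 and y > 0 (i.e., the nonzero one-step functions). -/

import Mathlib

open unitInterval

instance : Fact ((0:ℝ) ≤ 1) := ⟨zero_le_one⟩

/-- A self-map of `[0,1]` is join-continuous if it preserves all suprema. -/
def JoinCont (f : unitInterval → unitInterval) : Prop :=
  ∀ X : Set unitInterval, f (sSup X) = sSup (f '' X)

/-- The one-step function `e_{x,y}`: value `0` on `[0,x]` and `y` on `(x,1]`. -/
noncomputable def estep (x y : unitInterval) (t : unitInterval) : unitInterval :=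
  if t ≤ x then 0 else y

lemma uI_bot : (⊥ : unitInterval) = 0 := le_antisymm bot_le nonneg'

lemma uI_sup_resolve {a b c : unitInterval} (h : c ≤ a ⊔ b) : c ≤ a ∨ c ≤ b := by
  rcases le_total a b with hab | hab
  · right; rwa [sup_eq_right.2 hab] at h
  · left; rwa [sup_eq_left.2 hab] at h

lemma JoinCont.mono {f : unitInterval → unitInterval} (hf : JoinCont f) : Monotone f := by
  intro u v huv
  have h := hf {u, v}
  rw [Set.image_pair, sSup_pair, sSup_pair, sup_eq_right.2 huv] at h
  rw [h]; exact le_sup_left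

lemma JoinCont.map_zero {f : unitInterval → unitInterval} (hf : JoinCont f) : f 0 = 0 := by
  have h := hf ∅
  rw [Set.image_empty, sSup_empty, uI_bot] at h
  exact h

lemma estep_joinCont (x y : unitInterval) : JoinCont (estep x y) := by
  intro X
  simp only [estep]
  by_cases h : sSup X ≤ x
  · rw [if_pos h]
    refine (le_antisymm (sSup_le ?_) nonneg').symm
    rintro _ ⟨t, ht, rfl⟩
    beta_reduce
    rw [estep, if_pos ((le_sSup ht).trans h)]
  · rw [if_neg h]
    obtain ⟨t, htX, htx⟩ : ∃ t ∈ X, ¬ t ≤ x := by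
      by_contra hc
      push_neg at hc
      exact h (sSup_le hc)
    refine le_antisymm (le_sSup ⟨t, htX, ?_⟩) (sSup_le ?_)
    · beta_reduce
      rw [estep, if_neg htx]
    · rintro _ ⟨s, _, rfl⟩
      beta_reduce
      rw [estep]
      split
      · exact nonneg'
      · exact le_rfl

/-- The join-prime elements of the lattice of join-continuous self-maps of
`[0,1]` are exactly the one-step functions `e_{x,y}` with `x < 1` and
`0 < y`. -/
theorem stmt_17 (f : unitInterval → unitInterval) (hf : JoinCont f) :
    (f ≠ (fun _ => 0) ∧
      ∀ a b : unitInterval → unitInterval, JoinCont a → JoinCont b →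
        f ≤ a ⊔ b → f ≤ a ∨ f ≤ b) ↔
    ∃ x y : unitInterval, x < 1 ∧ 0 < y ∧ f = estep x y := by
  constructor
  · rintro ⟨hne, hprime⟩
    -- all nonzero values of f coincide
    have key : ∀ u v : unitInterval, 0 < f u → f u < f v → False := by
      intro u v hu huv
      have ha := estep_joinCont 0 (f u)
      have hb := estep_joinCont u 1
      have hab : f ≤ estep 0 (f u) ⊔ estep u 1 := by
        intro t
        rw [Pi.sup_apply]
        by_cases ht : t ≤ u
        · by_cases ht0 : t ≤ (0 : unitInterval)
          · have : t = 0 := le_antisymm ht0 nonneg'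
            rw [this, hf.map_zero]
            exact le_trans nonneg' le_sup_left
          · have : estep 0 (f u) t = f u := if_neg ht0
            exact le_trans (le_trans (hf.mono ht) this.ge) le_sup_left
        · have : estep u 1 t = 1 := if_neg ht
          exact le_trans (le_trans le_one' this.ge) le_sup_right
      rcases hprime _ _ ha hb hab with h | h
      · have hv := h v
        by_cases hv0 : v ≤ (0 : unitInterval)
        · have : v = 0 := le_antisymm hv0 nonneg'
          rw [this, hf.map_zero] at huv
          exact absurd (lt_trans hu huv).le (lt_irrefl (0:unitInterval) ∘ fun h' => lt_of_le_of_lt h' (lt_trans hu huv))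
        · rw [estep, if_neg hv0] at hv
          exact absurd hv (not_le.2 huv)
      · have hu' := h u
        rw [estep, if_pos le_rfl] at hu'
        exact absurd hu' (not_le.2 hu)
    have hsame : ∀ u v : unitInterval, f u ≠ 0 → f v ≠ 0 → f u = f v := by
      intro u v hu hv
      by_contra hne'
      rcases lt_or_gt_of_ne hne' with h | h
      · exact key u v (nonneg'.lt_of_ne (Ne.symm hu)) h
      · exact key v u (nonneg'.lt_of_ne (Ne.symm hv)) h
    -- f 1 ≠ 0
    have h1 : f 1 ≠ 0 := by
      intro h10
      apply hne
      funext t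
      have := hf.mono (le_one' : t ≤ 1)
      rw [h10] at this
      exact le_antisymm this nonneg'
    set Z : Set unitInterval := {t | f t = 0} with hZ
    set x : unitInterval := sSup Z with hx
    have hfx : f x = 0 := by
      have h := hf Z
      rw [hx, h]
      refine le_antisymm (sSup_le ?_) nonneg'
      rintro _ ⟨t, ht, rfl⟩
      exact ht.le
    refine ⟨x, f 1, ?_, nonneg'.lt_of_ne (Ne.symm h1), ?_⟩
    · refine lt_of_le_of_ne le_one' fun hx1 => ?_
      exact h1 (hx1 ▸ hfx)
    · funext t
      rw [estep]
      by_cases ht : t ≤ x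
      · rw [if_pos ht]
        exact le_antisymm (hfx ▸ hf.mono ht) nonneg'
      · rw [if_neg ht]
        have htZ : f t ≠ 0 := fun h0 => ht (le_sSup h0)
        exact hsame t 1 htZ h1
  · rintro ⟨x, y, hx1, hy, rfl⟩
    constructor
    · intro h
      have := congrFun h 1
      rw [estep, if_neg (not_le.2 hx1)] at this
      exact absurd this hy.ne'
    · intro a b ha hb hab
      by_cases H : ∀ t : unitInterval, ¬ t ≤ x → y ≤ a t
      · left
        intro t
        rw [estep]
        by_cases ht : t ≤ x
        · rw [if_pos ht]; exact nonneg'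
        · rw [if_neg ht]; exact H t ht
      · right
        push_neg at H
        obtain ⟨t₀, ht₀x', ht₀a'⟩ := H
        have ht₀x : ¬ t₀ ≤ x := not_le.2 ht₀x'
        have ht₀a : ¬ y ≤ a t₀ := not_le.2 ht₀a'
        intro t
        rw [estep]
        by_cases ht : t ≤ x
        · rw [if_pos ht]; exact nonneg'
        · rw [if_neg ht]
          rcases le_total t t₀ with htt | htt
          · have := hab t
            rw [Pi.sup_apply, estep, if_neg ht] at this
            rcases uI_sup_resolve this with h | h
            · exact absurd (h.trans (ha.mono htt)) ht₀a
            · exact h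
          · have := hab t₀
            rw [Pi.sup_apply, estep, if_neg ht₀x] at this
            rcases uI_sup_resolve this with h | h
            · exact absurd h ht₀a
            · exact h.trans (hb.mono htt)
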